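/- For coprime positive integers n and p, the number of lattice paths from (0,0) to (p,n) using unit north and east steps that stay weakly above the diagonal line from (0,0) to (p,n) equals Cat_{n,p} = (1/(p+n)) * binomial(p+n, n). -/

import Mathlib

namespace RDP

open Fin.NatCast

def Tz (n p : ℕ) [NeZero (p + n)] (f : Fin (p + n) → Bool) (k : ℕ) : ℤ :=
  ∑ i ∈ Finset.range k, (if f (i : Fin (p + n)) then 1 else 0)

def S (n p : ℕ) [NeZero (p + n)] (f : Fin (p + n) → Bool) (k : ℕ) : ℤ :=
  (p + n) * Tz n p f k - n * k

def rot (n p : ℕ) [NeZero (p + n)] (c : Fin (p + n)) (f : Fin (p + n) → Bool) :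
    Fin (p + n) → Bool := fun i => f (i + c)

def Good (n p : ℕ) [NeZero (p + n)] (f : Fin (p + n) → Bool) : Prop :=
  ∀ k, 0 ≤ S n p f k

variable {n p : ℕ} [NeZero (p + n)]

lemma sum_range_ite {N k : ℕ} (g : ℕ → ℤ) (hk : k ≤ N) :
    ∑ i ∈ Finset.range N, (if i < k then g i else 0) = ∑ i ∈ Finset.range k, g i := by
  rw [← Finset.sum_filter]
  congr 1
  ext x; simp [Finset.mem_range]; omega

lemma tz_card (f : Fin (p + n) → Bool) {k : ℕ} (hk : k ≤ p + n) :
    ((Finset.univ.filter (fun i : Fin (p + n) => (i : ℕ) < k ∧ f i = true)).card : ℤ)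
      = Tz n p f k := by
  rw [Finset.card_filter, Tz]
  push_cast
  rw [← sum_range_ite (fun i => if f (i : Fin (p+n)) then (1:ℤ) else 0) hk]
  rw [Finset.sum_range (fun i => if i < k then (if f (i : Fin (p+n)) then (1:ℤ) else 0) else 0)]
  refine Finset.sum_congr rfl fun i _ => ?_
  rw [Fin.cast_val_eq_self]
  by_cases h1 : (i : ℕ) < k <;> by_cases h2 : f i <;> simp [h1, h2]

lemma fz_card (f : Fin (p + n) → Bool) {k : ℕ} (hk : k ≤ p + n) :
    ((Finset.univ.filter (fun i : Fin (p + n) => (i : ℕ) < k ∧ f i = false)).card : ℤ)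
      = Tz n p (fun i => !f i) k := by
  rw [← tz_card (fun i => !f i) hk]
  congr 2
  ext i
  simp [Bool.not_eq_true']

lemma tz_add_compl (f : Fin (p + n) → Bool) (k : ℕ) :
    Tz n p f k + Tz n p (fun i => !f i) k = k := by
  rw [Tz, Tz, ← Finset.sum_add_distrib]
  rw [Finset.sum_congr rfl (fun i _ => by cases h : f (i : Fin (p+n)) <;> simp [h] :
    ∀ i ∈ Finset.range k, ((if f (i : Fin (p+n)) then (1:ℤ) else 0)
      + (if (!f (i : Fin (p+n))) = true then (1:ℤ) else 0)) = 1)]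
  simp

lemma tz_nonneg (f : Fin (p + n) → Bool) (k : ℕ) : 0 ≤ Tz n p f k :=
  Finset.sum_nonneg fun i _ => by positivity

lemma tz_le (f : Fin (p + n) → Bool) (k : ℕ) : Tz n p f k ≤ k := by
  have h := tz_add_compl f k
  have := tz_nonneg (fun i => !f i) k
  omega

lemma tz_shift (f : Fin (p + n) → Bool) (k : ℕ) :
    Tz n p f (k + (p + n)) = Tz n p f k + Tz n p f (p + n) := by
  rw [Tz, Finset.sum_range_add]
  congr 1
  have h1 : ∀ i : ℕ, ((k + i : ℕ) : Fin (p+n)) = (k : Fin (p+n)) + (i : Fin (p+n)) := by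
    intro i; push_cast; ring
  calc (∑ i ∈ Finset.range (p+n), if f ((k + i : ℕ) : Fin (p+n)) then (1:ℤ) else 0)
      = ∑ j : Fin (p+n), (if f ((k : Fin (p+n)) + j) then (1:ℤ) else 0) := by
        rw [Finset.sum_range]
        exact Finset.sum_congr rfl fun j _ => by rw [h1, Fin.cast_val_eq_self]
    _ = ∑ j : Fin (p+n), (if f j then (1:ℤ) else 0) :=
        Equiv.sum_comp (Equiv.addLeft ((k : Fin (p+n)))) (fun j => if f j then (1:ℤ) else 0)
    _ = Tz n p f (p + n) := by
        rw [Tz, Finset.sum_range]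
        exact Finset.sum_congr rfl fun j _ => by rw [Fin.cast_val_eq_self]

lemma tz_rot (c : Fin (p + n)) (f : Fin (p + n) → Bool) (k : ℕ) :
    Tz n p (rot n p c f) k = Tz n p f ((c : ℕ) + k) - Tz n p f (c : ℕ) := by
  have : Tz n p f ((c : ℕ) + k) = Tz n p f (c : ℕ) + Tz n p (rot n p c f) k := by
    rw [Tz, Finset.sum_range_add]
    congr 1
    refine Finset.sum_congr rfl fun i _ => ?_
    have h1 : (((c : ℕ) + i : ℕ) : Fin (p+n)) = (i : Fin (p+n)) + c := by
      push_cast [Fin.cast_val_eq_self]; abel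
    rw [h1]; rfl
  omega

lemma s_rot (c : Fin (p + n)) (f : Fin (p + n) → Bool) (k : ℕ) :
    S n p (rot n p c f) k = S n p f ((c : ℕ) + k) - S n p f (c : ℕ) := by
  rw [S, S, S, tz_rot]
  push_cast
  ring

lemma s_period (f : Fin (p + n) → Bool) (hf : Tz n p f (p + n) = n) (k : ℕ) :
    S n p f (k + (p + n)) = S n p f k := by
  rw [S, S, tz_shift, hf]
  push_cast
  ring

lemma s_mod (f : Fin (p + n) → Bool) (hf : Tz n p f (p + n) = n) (k : ℕ) :
    S n p f k = S n p f (k % (p + n)) := by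
  induction k using Nat.strong_induction_on with
  | _ k ih =>
    rcases lt_or_ge k (p + n) with hk | hk
    · rw [Nat.mod_eq_of_lt hk]
    · have hN : 0 < p + n := Nat.pos_of_ne_zero (NeZero.ne _)
      have h1 : k = (k - (p + n)) + (p + n) := by omega
      rw [h1, s_period f hf, ih _ (by omega), Nat.add_mod_right]

lemma s_zmod (f : Fin (p + n) → Bool) (k : ℕ) :
    ((S n p f k : ℤ) : ZMod (p + n)) = -(n : ZMod (p + n)) * k := by
  rw [S]
  push_cast
  rw [show ((p : ZMod (p+n)) + n) = ((p + n : ℕ) : ZMod (p+n)) by push_cast; ring,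
    ZMod.natCast_self]
  ring

lemma rot_rot (c d : Fin (p + n)) (f : Fin (p + n) → Bool) :
    rot n p d (rot n p c f) = rot n p (c + d) f := by
  funext i
  show f (i + d + c) = f (i + (c + d))
  rw [add_assoc, add_comm d c]

lemma rot_zero (f : Fin (p + n) → Bool) : rot n p 0 f = f := by
  funext i; show f (i + 0) = f i; rw [add_zero]

lemma tz_rot_top (c : Fin (p + n)) (f : Fin (p + n) → Bool) :
    Tz n p (rot n p c f) (p + n) = Tz n p f (p + n) := by
  rw [tz_rot, tz_shift]
  ring

lemma tz_top_card (f : Fin (p + n) → Bool) :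
    ((Finset.univ.filter (fun i => f i = true)).card : ℤ) = Tz n p f (p + n) := by
  rw [← tz_card f (le_refl (p + n))]
  congr 2
  ext i
  simp [i.isLt]

/-- The cycle lemma: for each `f` with `n` norths there is a unique good rotation. -/
lemma cycle_lemma (hn : 0 < n) (hcop : Nat.Coprime n (p + n))
    (f : Fin (p + n) → Bool) (hf : Tz n p f (p + n) = n) :
    ∃! c : Fin (p + n), Good n p (rot n p c f) := by
  have hN : 0 < p + n := Nat.pos_of_ne_zero (NeZero.ne _)
  -- uniqueness of values of S mod p+n
  have hval : ∀ c c' : Fin (p + n), S n p f (c : ℕ) = S n p f (c' : ℕ) → c = c' := by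
    intro c c' hS
    have h1 := s_zmod f (c : ℕ) (p := p)
    have h2 := s_zmod f (c' : ℕ) (p := p)
    rw [hS] at h1
    rw [h1] at h2
    have h3 : (n : ZMod (p + n)) * (c : ℕ) = (n : ZMod (p + n)) * (c' : ℕ) := by
      have := h2
      linear_combination -this
    have hu : IsUnit (n : ZMod (p + n)) :=
      ⟨ZMod.unitOfCoprime n hcop, ZMod.coe_unitOfCoprime n hcop⟩
    have h4 : ((c : ℕ) : ZMod (p + n)) = ((c' : ℕ) : ZMod (p + n)) :=
      hu.mul_left_cancel h3
    have h5 := congrArg ZMod.val h4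
    rw [ZMod.val_natCast_of_lt c.isLt, ZMod.val_natCast_of_lt c'.isLt] at h5
    exact Fin.ext h5
  -- goodness of rotation c means c.val is a global minimizer
  have hgood : ∀ c : Fin (p + n), Good n p (rot n p c f) ↔
      ∀ j : ℕ, j < p + n → S n p f (c : ℕ) ≤ S n p f j := by
    intro c
    constructor
    · intro hg j hj
      have hk := hg (j + (p + n) - (c : ℕ))
      rw [s_rot] at hk
      have hce : (c : ℕ) + (j + (p + n) - (c : ℕ)) = j + (p + n) := by
        have := c.isLt; omega
      rw [hce, s_period f hf] at hk
      omega
    · intro hmin k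
      rw [s_rot]
      have h1 : S n p f ((c : ℕ) + k) = S n p f (((c : ℕ) + k) % (p + n)) := s_mod f hf _
      have h2 := hmin (((c : ℕ) + k) % (p + n)) (Nat.mod_lt _ hN)
      omega
  -- existence of a minimizer
  obtain ⟨c0, hc0mem, hc0⟩ := Finset.exists_min_image (Finset.range (p + n))
    (fun j => S n p f j) ⟨0, Finset.mem_range.mpr hN⟩
  have hc0lt := Finset.mem_range.mp hc0mem
  refine ⟨(c0 : Fin (p + n)), ?_, ?_⟩
  · show Good n p (rot n p (c0 : Fin (p + n)) f)
    rw [hgood]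
    intro j hj
    rw [Fin.val_cast_of_lt hc0lt]
    exact hc0 j (Finset.mem_range.mpr hj)
  · intro c hc
    apply hval
    rw [hgood] at hc
    have h1 := hc c0 hc0lt
    have h2 := hc0 (c : ℕ) (Finset.mem_range.mpr c.isLt)
    rw [Fin.val_cast_of_lt hc0lt]
    omega

end RDP

open RDP in
theorem rational_dyck_path_count (n p : ℕ) (hn : 0 < n) (hp : 0 < p)
    (h : Nat.Coprime n p) :
    ((Finset.univ : Finset (Fin (p + n) → Bool)).filter (fun f =>
      (Finset.univ.filter (fun i => f i = true)).card = n ∧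
      ∀ k : ℕ, k ≤ p + n →
        n * (Finset.univ.filter (fun i : Fin (p + n) => (i : ℕ) < k ∧ f i = false)).card ≤
          p * (Finset.univ.filter (fun i : Fin (p + n) => (i : ℕ) < k ∧ f i = true)).card)).card
      = Nat.choose (p + n) n / (p + n) := by
  classical
  have hN : 0 < p + n := by omega
  haveI : NeZero (p + n) := ⟨by omega⟩
  have hcop : Nat.Coprime n (p + n) := by
    simpa using (Nat.coprime_add_self_right (m := n) (n := p)).mpr h
  -- the statement's condition is equivalent to (Tz f (p+n) = n ∧ Good f)
  have hcond : ∀ f : Fin (p + n) → Bool,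
      ((Finset.univ.filter (fun i => f i = true)).card = n ∧
        ∀ k : ℕ, k ≤ p + n →
          n * (Finset.univ.filter (fun i : Fin (p + n) => (i : ℕ) < k ∧ f i = false)).card ≤
            p * (Finset.univ.filter (fun i : Fin (p + n) => (i : ℕ) < k ∧ f i = true)).card)
      ↔ (Tz n p f (p + n) = n ∧ Good n p f) := by
    intro f
    have htop := tz_top_card (n := n) (p := p) f
    have hstep : ∀ k : ℕ, k ≤ p + n →
        ((n * (Finset.univ.filter (fun i : Fin (p + n) => (i : ℕ) < k ∧ f i = false)).card ≤
          p * (Finset.univ.filter (fun i : Fin (p + n) => (i : ℕ) < k ∧ f i = true)).card)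
        ↔ 0 ≤ S n p f k) := by
      intro k hk
      rw [show (n * (Finset.univ.filter (fun i : Fin (p + n) => (i : ℕ) < k ∧ f i = false)).card ≤
          p * (Finset.univ.filter (fun i : Fin (p + n) => (i : ℕ) < k ∧ f i = true)).card)
        ↔ ((n : ℤ) * ((Finset.univ.filter (fun i : Fin (p + n) => (i : ℕ) < k ∧ f i = false)).card : ℤ) ≤
          (p : ℤ) * ((Finset.univ.filter (fun i : Fin (p + n) => (i : ℕ) < k ∧ f i = true)).card : ℤ))
        from by exact_mod_cast Iff.rfl]
      rw [tz_card f hk, fz_card f hk, S]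
      have hc := tz_add_compl f k
      constructor
      · intro h1; nlinarith
      · intro h1; nlinarith
    constructor
    · rintro ⟨h1, h2⟩
      have h1' : Tz n p f (p + n) = n := by rw [← htop, h1]
      refine ⟨h1', fun k => ?_⟩
      rw [s_mod f h1' k]
      exact (hstep _ (le_of_lt (Nat.mod_lt _ hN))).mp (h2 _ (le_of_lt (Nat.mod_lt _ hN)))
    · rintro ⟨h1, h2⟩
      refine ⟨by exact_mod_cast htop.trans h1, fun k hk => (hstep k hk).mpr (h2 k)⟩
  -- replace the filter
  rw [Finset.filter_congr (fun f _ => by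
    rw [hcond f] :
    ∀ f ∈ (Finset.univ : Finset (Fin (p + n) → Bool)), _ ↔ (Tz n p f (p+n) = n ∧ Good n p f))]
  set G := (Finset.univ : Finset (Fin (p + n) → Bool)).filter
    (fun f => Tz n p f (p+n) = n ∧ Good n p f) with hG
  set D := (Finset.univ : Finset (Fin (p + n) → Bool)).filter
    (fun f => Tz n p f (p+n) = n) with hD
  -- D has (p+n).choose n elements
  have hDcard : D.card = Nat.choose (p + n) n := by
    have h1 : D = Finset.univ.filter
        (fun f : Fin (p+n) → Bool => (Finset.univ.filter (fun i => f i = true)).card = n) := by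
      rw [hD]
      apply Finset.filter_congr
      intro f _
      rw [show (Tz n p f (p+n) = n) ↔ ((Finset.univ.filter (fun i => f i = true)).card : ℤ)
        = (n : ℤ) from by rw [tz_top_card f]]
      exact_mod_cast Iff.rfl
    rw [h1]
    have h2 : (Finset.univ.filter
        (fun f : Fin (p+n) → Bool => (Finset.univ.filter (fun i => f i = true)).card = n)).card
        = (Finset.powersetCard n (Finset.univ : Finset (Fin (p+n)))).card := by
      apply Finset.card_bij' (fun f _ => Finset.univ.filter (fun i => f i = true))
        (fun s _ => fun i => decide (i ∈ s))
      · intro f _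
        funext i
        simp
      · intro s _
        simp
      · intro f hf
        simp only [Finset.mem_filter, Finset.mem_univ, true_and] at hf
        exact Finset.mem_powersetCard.mpr ⟨Finset.subset_univ _, hf⟩
      · intro s hs
        rw [Finset.mem_powersetCard] at hs
        simp [hs.2]
    rw [h2, Finset.card_powersetCard, Finset.card_univ, Fintype.card_fin]
  -- D.card = G.card * (p+n) via the cycle lemma
  have hmain : D.card = G.card * (p + n) := by
    have hcl := fun (g : Fin (p+n) → Bool) (hg : Tz n p g (p+n) = n) =>
      cycle_lemma hn hcop g hg
    let cc : (Fin (p + n) → Bool) → Fin (p + n) := fun g =>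
      if hg : Tz n p g (p+n) = (n : ℤ) then (hcl g hg).choose else 0
    have hcc1 : ∀ g (hg : Tz n p g (p+n) = (n : ℤ)), Good n p (rot n p (cc g) g) := by
      intro g hg
      simp only [cc, dif_pos hg]
      exact (hcl g hg).choose_spec.1
    have hcc2 : ∀ g (hg : Tz n p g (p+n) = (n : ℤ)) c, Good n p (rot n p c g) → c = cc g := by
      intro g hg c hc
      simp only [cc, dif_pos hg]
      exact (hcl g hg).choose_spec.2 c hc
    have hbij : (G ×ˢ (Finset.univ : Finset (Fin (p + n)))).card = D.card := by
      apply Finset.card_bij' (fun fc _ => rot n p fc.2 fc.1)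
        (fun g _ => (rot n p (cc g) g, -(cc g)))
      · rintro ⟨f, c⟩ hfc
        rw [Finset.mem_product, hG, Finset.mem_filter] at hfc
        rw [hD, Finset.mem_filter]
        exact ⟨Finset.mem_univ _, (tz_rot_top c f).trans hfc.1.2.1⟩
      · intro g hg
        rw [hD, Finset.mem_filter] at hg
        rw [Finset.mem_product, hG, Finset.mem_filter]
        exact ⟨⟨Finset.mem_univ _, (tz_rot_top _ g).trans hg.2, hcc1 g hg.2⟩, Finset.mem_univ _⟩
      · rintro ⟨f, c⟩ hfc
        rw [Finset.mem_product, hG, Finset.mem_filter] at hfc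
        have hgD : Tz n p (rot n p c f) (p+n) = (n : ℤ) := (tz_rot_top c f).trans hfc.1.2.1
        have hfgood : Good n p (rot n p (-c) (rot n p c f)) := by
          rw [rot_rot, add_neg_cancel, rot_zero]
          exact hfc.1.2.2
        have hcceq : -c = cc (rot n p c f) := hcc2 _ hgD (-c) hfgood
        rw [← hcceq, rot_rot, add_neg_cancel, rot_zero, neg_neg]
      · intro g hg
        rw [rot_rot, add_neg_cancel, rot_zero]
    rw [← hbij, Finset.card_product, Finset.card_univ, Fintype.card_fin]
  rw [hDcard] at hmain
  rw [hmain] at *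
  exact (Nat.mul_div_cancel _ hN).symm
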